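/- Let I be a two-sided ideal of U(g) with PBW basis S. The set T(I) of leading monomials of nonzero elements of I is an upper set for the componentwise partial ordering ⪯ on monomials: if V ∈ T(I), W ∈ S and V ⪯ W (i.e., each exponent of V is at most the corresponding exponent of W), then W ∈ T(I). -/

import Mathlib

open UniversalEnvelopingAlgebra Module

section
attribute [local instance 100] LieRing.ofAssociativeRing
variable {L : Type*} [LieRing L] [LieAlgebra ℂ L] {n : ℕ}

local notation "U" => UniversalEnvelopingAlgebra ℂ L

theorem prod_peel (f : Fin n → U) (i : Fin n) (hf : ∀ k, k < i → f k = 1) :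
    ((List.finRange n).map f).prod = f i * (((List.finRange n).drop (i.val+1)).map f).prod := by
  have hlen : i.val < (List.finRange n).length := by simp [i.isLt]
  have hdrop : (List.finRange n).drop i.val = i :: (List.finRange n).drop (i.val+1) := by
    rw [List.drop_eq_getElem_cons hlen]
    congr 1
    simp
  conv_lhs => rw [← List.take_append_drop i.val (List.finRange n)]
  rw [List.map_append, List.prod_append, hdrop, List.map_cons, List.prod_cons]
  have h1 : (((List.finRange n).take i.val).map f).prod = 1 := by
    apply List.prod_eq_one
    intro x hx
    simp only [List.mem_map] at hx
    obtain ⟨k, hk, rfl⟩ := hx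
    rw [List.mem_take_iff_getElem] at hk
    obtain ⟨j, hj, hjk⟩ := hk
    apply hf
    have : k.val = j := by rw [← hjk]; simp
    have hji : j < i.val := by omega
    exact Fin.lt_def.mpr (by omega)
  rw [h1, one_mul]

theorem mem_drop_gt (i : Fin n) (k : Fin n) (hk : k ∈ (List.finRange n).drop (i.val+1)) :
    i < k := by
  have hlen : i.val < (List.finRange n).length := by simp [i.isLt]
  have hdrop : (List.finRange n).drop i.val = i :: (List.finRange n).drop (i.val+1) := by
    rw [List.drop_eq_getElem_cons hlen]; congr 1; simp
  have hp : ((List.finRange n).drop i.val).Pairwise (· < ·) :=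
    (List.pairwise_lt_finRange n).sublist (List.drop_sublist _ _)
  rw [hdrop, List.pairwise_cons] at hp
  exact hp.1 k hk

variable (X : Fin n → L) (B : Basis (Fin n →₀ ℕ) ℂ (UniversalEnvelopingAlgebra ℂ L))
  (hB : ∀ m : Fin n →₀ ℕ, B m =
      ((List.finRange n).map fun i => (UniversalEnvelopingAlgebra.ι ℂ (X i)) ^ (m i)).prod)

/-- total degree -/
def dg (m : Fin n →₀ ℕ) : ℕ := m.sum fun _ k => k

include hB in
theorem mono_zero : B 0 = (1 : U) := by
  rw [hB]
  apply List.prod_eq_one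
  intro x hx
  simp only [List.mem_map] at hx
  obtain ⟨k, _, rfl⟩ := hx
  simp

include hB in
theorem mono_mul (m : Fin n →₀ ℕ) (i : Fin n) (him : ∀ k, k < i → m k = 0) :
    B (m + Finsupp.single i 1) = ι ℂ (X i) * B m := by
  rw [hB, hB]
  rw [prod_peel _ i (fun k hk => by simp [him k hk, Finsupp.single_eq_of_ne' (by exact fun h => absurd h (ne_of_gt hk))]),
      prod_peel _ i (fun k hk => by simp [him k hk])]
  have htail : ((List.finRange n).drop (i.val+1)).map (fun k => (ι ℂ (X k) : U) ^ (((m + Finsupp.single i 1) : Fin n →₀ ℕ) k))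
      = ((List.finRange n).drop (i.val+1)).map (fun k => (ι ℂ (X k) : U) ^ (m k)) := by
    apply List.map_congr_left
    intro k hk
    have : i < k := mem_drop_gt i k hk
    simp [Finsupp.add_apply, Finsupp.single_eq_of_ne' (ne_of_gt this).symm]
  rw [htail]
  have : ((m + Finsupp.single i 1) : Fin n →₀ ℕ) i = m i + 1 := by simp
  rw [this, pow_succ', mul_assoc]

open TensorProduct in
noncomputable def dHom : L →ₗ⁅ℂ⁆ (TensorProduct ℂ U U) where
  toFun z := (ι ℂ z) ⊗ₜ[ℂ] 1 + 1 ⊗ₜ[ℂ] (ι ℂ z)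
  map_add' a b := by
    simp only [map_add, TensorProduct.add_tmul, TensorProduct.tmul_add]
    abel
  map_smul' c a := by
    simp only [map_smul, TensorProduct.smul_tmul', ← TensorProduct.tmul_smul,
      RingHom.id_apply, smul_add, TensorProduct.smul_tmul]
  map_lie' := by
    intro a b
    simp only [LieHom.map_lie, Ring.lie_def, Algebra.TensorProduct.tmul_mul_tmul,
      mul_one, one_mul, TensorProduct.sub_tmul, TensorProduct.tmul_sub, add_mul, mul_add]
    abel

noncomputable def Delta : UniversalEnvelopingAlgebra ℂ L →ₐ[ℂ] (TensorProduct ℂ U U) :=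
  lift ℂ (dHom)

theorem Delta_ι (z : L) : Delta (ι ℂ z) = (ι ℂ z) ⊗ₜ[ℂ] 1 + 1 ⊗ₜ[ℂ] (ι ℂ z) :=
  lift_ι_apply ℂ dHom z

noncomputable def BB (B : Basis (Fin n →₀ ℕ) ℂ (UniversalEnvelopingAlgebra ℂ L)) :
    Basis ((Fin n →₀ ℕ) × (Fin n →₀ ℕ)) ℂ (TensorProduct ℂ U U) := B.tensorProduct B

include hB in
theorem repr_mul_left (i : Fin n) (y : TensorProduct ℂ U U)
    (hy : ∀ p ∈ ((BB B).repr y).support, ∀ k, k < i → p.1 k = 0) :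
    (BB B).repr (((ι ℂ (X i) : U) ⊗ₜ[ℂ] (1:U)) * y) =
      ((BB B).repr y).mapDomain (fun p => (p.1 + Finsupp.single i 1, p.2)) := by
  have hy' : y = ((BB B).repr y).sum fun p c => c • ((B p.1 : U) ⊗ₜ[ℂ] (B p.2 : U)) := by
    conv_lhs => rw [← (BB B).linearCombination_repr y]
    rw [Finsupp.linearCombination_apply]
    exact Finsupp.sum_congr fun p _ => by rw [BB, Basis.tensorProduct_apply']
  have step1 : ((ι ℂ (X i) : U) ⊗ₜ[ℂ] (1:U)) * y
      = ((BB B).repr y).sum fun p c => c • ((B (p.1 + Finsupp.single i 1) : U) ⊗ₜ[ℂ] (B p.2 : U)) := by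
    conv_lhs => rw [hy']
    rw [Finsupp.mul_sum]
    apply Finsupp.sum_congr
    intro p hp
    rw [mul_smul_comm, Algebra.TensorProduct.tmul_mul_tmul, one_mul,
      ← mono_mul X B hB p.1 i (hy p hp)]
  rw [step1, map_finsuppSum, Finsupp.mapDomain]
  apply Finsupp.sum_congr
  intro p _
  rw [show (B (p.1 + Finsupp.single i 1) : U) ⊗ₜ[ℂ] (B p.2 : U)
        = (BB B) (p.1 + Finsupp.single i 1, p.2) by rw [BB, Basis.tensorProduct_apply],
    map_smul, Basis.repr_self, Finsupp.smul_single', mul_one]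

include hB in
theorem repr_mul_right (i : Fin n) (y : TensorProduct ℂ U U)
    (hy : ∀ p ∈ ((BB B).repr y).support, ∀ k, k < i → p.2 k = 0) :
    (BB B).repr (((1:U) ⊗ₜ[ℂ] (ι ℂ (X i) : U)) * y) =
      ((BB B).repr y).mapDomain (fun p => (p.1, p.2 + Finsupp.single i 1)) := by
  have hy' : y = ((BB B).repr y).sum fun p c => c • ((B p.1 : U) ⊗ₜ[ℂ] (B p.2 : U)) := by
    conv_lhs => rw [← (BB B).linearCombination_repr y]
    rw [Finsupp.linearCombination_apply]
    exact Finsupp.sum_congr fun p _ => by rw [BB, Basis.tensorProduct_apply']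
  have step1 : ((1:U) ⊗ₜ[ℂ] (ι ℂ (X i) : U)) * y
      = ((BB B).repr y).sum fun p c => c • ((B p.1 : U) ⊗ₜ[ℂ] (B (p.2 + Finsupp.single i 1) : U)) := by
    conv_lhs => rw [hy']
    rw [Finsupp.mul_sum]
    apply Finsupp.sum_congr
    intro p hp
    rw [mul_smul_comm, Algebra.TensorProduct.tmul_mul_tmul, one_mul,
      ← mono_mul X B hB p.2 i (hy p hp)]
  rw [step1, map_finsuppSum, Finsupp.mapDomain]
  apply Finsupp.sum_congr
  intro p _
  rw [show (B p.1 : U) ⊗ₜ[ℂ] (B (p.2 + Finsupp.single i 1) : U)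
        = (BB B) (p.1, p.2 + Finsupp.single i 1) by rw [BB, Basis.tensorProduct_apply],
    map_smul, Basis.repr_self, Finsupp.smul_single', mul_one]

theorem exists_peel (m : Fin n →₀ ℕ) (hm : m ≠ 0) :
    ∃ (i : Fin n) (m' : Fin n →₀ ℕ), m = m' + Finsupp.single i 1 ∧
      (∀ k, k < i → m k = 0) ∧ (∀ k, k < i → m' k = 0) ∧ m' i + 1 = m i ∧
      dg m = dg m' + 1 ∧ m - Finsupp.single i 1 = m' := by
  have hne : m.support.Nonempty := Finsupp.support_nonempty_iff.mpr hm
  set i := m.support.min' hne with hi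
  have himem : i ∈ m.support := m.support.min'_mem hne
  have hmi : m i ≠ 0 := Finsupp.mem_support_iff.mp himem
  refine ⟨i, m - Finsupp.single i 1, ?_, ?_, ?_, ?_, ?_, rfl⟩
  · ext k
    by_cases hk : k = i
    · subst hk
      simp only [Finsupp.add_apply, Finsupp.tsub_apply, Finsupp.single_eq_same]
      omega
    · simp [Finsupp.add_apply, Finsupp.tsub_apply, Finsupp.single_eq_of_ne' (Ne.symm hk)]
  · intro k hk
    by_contra hk0
    exact absurd (m.support.min'_le k (Finsupp.mem_support_iff.mpr hk0)) (not_le.mpr hk)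
  · intro k hk
    have h0 : m k = 0 := by
      by_contra hk0
      exact absurd (m.support.min'_le k (Finsupp.mem_support_iff.mpr hk0)) (not_le.mpr hk)
    simp [Finsupp.tsub_apply, h0]
  · simp only [Finsupp.tsub_apply, Finsupp.single_eq_same]
    omega
  · have : m = (m - Finsupp.single i 1) + Finsupp.single i 1 := by
      ext k
      by_cases hk : k = i
      · subst hk
        simp only [Finsupp.add_apply, Finsupp.tsub_apply, Finsupp.single_eq_same]
        omega
      · simp [Finsupp.add_apply, Finsupp.tsub_apply, Finsupp.single_eq_of_ne' (Ne.symm hk)]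
    conv_lhs => rw [this]
    rw [show dg ((m - Finsupp.single i 1) + Finsupp.single i 1)
        = dg (m - Finsupp.single i 1) + dg (Finsupp.single i 1) from
      Finsupp.sum_add_index' (fun _ => rfl) (fun _ _ _ => rfl)]
    simp [dg]

theorem dg_add (a b : Fin n →₀ ℕ) : dg (a + b) = dg a + dg b :=
  Finsupp.sum_add_index' (fun _ => rfl) (fun _ _ _ => rfl)

include hB in
theorem delta_struct : ∀ (d : ℕ) (m : Fin n →₀ ℕ), dg m ≤ d →
    (∀ p ∈ ((BB B).repr (Delta (B m))).support, p.1 + p.2 = m) ∧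
    ((BB B).repr (Delta (B m)) (0, m) = 1) ∧
    (∀ i : Fin n, (∀ j ∈ m.support, i ≤ j) →
      (BB B).repr (Delta (B m)) (Finsupp.single i 1, m - Finsupp.single i 1) = (m i : ℂ)) := by
  have hdeg : ∀ m : Fin n →₀ ℕ, dg m = 0 → m = 0 := by
    intro m h
    rwa [show dg m = Finsupp.degree m from rfl, Finsupp.degree_eq_zero_iff] at h
  have hbase : ∀ m : Fin n →₀ ℕ, m = 0 →
      (∀ p ∈ ((BB B).repr (Delta (B m))).support, p.1 + p.2 = m) ∧
      ((BB B).repr (Delta (B m)) (0, m) = 1) ∧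
      (∀ i : Fin n, (∀ j ∈ m.support, i ≤ j) →
        (BB B).repr (Delta (B m)) (Finsupp.single i 1, m - Finsupp.single i 1) = (m i : ℂ)) := by
    intro m hm
    subst hm
    have h1 : Delta (B (0 : Fin n →₀ ℕ)) = (BB B) (0, 0) := by
      rw [mono_zero X B hB, map_one, BB, Basis.tensorProduct_apply, mono_zero X B hB,
        Algebra.TensorProduct.one_def]
    rw [h1, Basis.repr_self]
    refine ⟨?_, ?_, ?_⟩
    · intro p hp
      have := Finsupp.support_single_subset hp
      simp only [Finset.mem_singleton] at this
      rw [this]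
      simp
    · simp
    · intro i _
      rw [Finsupp.single_apply_eq_zero.mpr ?_]
      · simp
      · intro h
        exfalso
        have : Finsupp.single i 1 = (0 : Fin n →₀ ℕ) := congrArg Prod.fst h
        simpa using DFunLike.congr_fun this i
  intro d
  induction d with
  | zero =>
    intro m hdm
    exact hbase m (hdeg m (Nat.le_zero.mp hdm))
  | succ e IH =>
    intro m hdm
    by_cases hm : m = 0
    · exact hbase m hm
    obtain ⟨i₀, m', hsplit, hmz, hm'z, hmi, hdg, hsub⟩ := exists_peel m hm
    have IH' := IH m' (by omega)
    set R' := (BB B).repr (Delta (B m')) with hR'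
    set g₁ : (Fin n →₀ ℕ) × (Fin n →₀ ℕ) → (Fin n →₀ ℕ) × (Fin n →₀ ℕ) :=
      fun p => (p.1 + Finsupp.single i₀ 1, p.2) with hg₁
    set g₂ : (Fin n →₀ ℕ) × (Fin n →₀ ℕ) → (Fin n →₀ ℕ) × (Fin n →₀ ℕ) :=
      fun p => (p.1, p.2 + Finsupp.single i₀ 1) with hg₂
    have hg₁inj : Function.Injective g₁ := by
      intro p q h
      rw [Prod.ext_iff] at h ⊢
      exact ⟨add_right_cancel h.1, h.2⟩
    have hg₂inj : Function.Injective g₂ := by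
      intro p q h
      rw [Prod.ext_iff] at h ⊢
      exact ⟨h.1, add_right_cancel h.2⟩
    have hcond1 : ∀ p ∈ R'.support, ∀ k, k < i₀ → p.1 k = 0 := by
      intro p hp k hk
      have h1 := IH'.1 p hp
      have h2 := DFunLike.congr_fun h1 k
      simp only [Finsupp.add_apply] at h2
      have := hm'z k hk
      omega
    have hcond2 : ∀ p ∈ R'.support, ∀ k, k < i₀ → p.2 k = 0 := by
      intro p hp k hk
      have h1 := IH'.1 p hp
      have h2 := DFunLike.congr_fun h1 k
      simp only [Finsupp.add_apply] at h2
      have := hm'z k hk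
      omega
    have hBm : B m = ι ℂ (X i₀) * B m' := by
      rw [hsplit]; exact mono_mul X B hB m' i₀ hm'z
    have hkey : (BB B).repr (Delta (B m)) = R'.mapDomain g₁ + R'.mapDomain g₂ := by
      have hsplitD : Delta (B m) = (((ι ℂ (X i₀) : U) ⊗ₜ[ℂ] (1:U)) * Delta (B m'))
          + (((1:U) ⊗ₜ[ℂ] (ι ℂ (X i₀) : U)) * Delta (B m')) := by
        rw [hBm, map_mul, Delta_ι, add_mul]
      rw [hsplitD, map_add, repr_mul_left X B hB i₀ _ hcond1, repr_mul_right X B hB i₀ _ hcond2]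
    have parta : ∀ p ∈ ((BB B).repr (Delta (B m))).support, p.1 + p.2 = m := by
      intro p hp
      rw [hkey] at hp
      have hp2 := Finsupp.support_add hp
      rw [Finset.mem_union] at hp2
      rcases hp2 with hp2 | hp2
      · classical
        have := Finsupp.mapDomain_support hp2
        rw [Finset.mem_image] at this
        obtain ⟨q, hq, rfl⟩ := this
        have hq' := IH'.1 q hq
        show q.1 + Finsupp.single i₀ 1 + q.2 = m
        rw [add_right_comm, hq', ← hsplit]
      · classical
        have := Finsupp.mapDomain_support hp2
        rw [Finset.mem_image] at this
        obtain ⟨q, hq, rfl⟩ := this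
        have hq' := IH'.1 q hq
        show q.1 + (q.2 + Finsupp.single i₀ 1) = m
        rw [← add_assoc, hq', ← hsplit]
    have partb : (BB B).repr (Delta (B m)) (0, m) = 1 := by
      rw [hkey, Finsupp.add_apply]
      have h1 : R'.mapDomain g₁ (0, m) = 0 := by
        apply Finsupp.mapDomain_notin_range
        rintro ⟨q, hq⟩
        have : q.1 + Finsupp.single i₀ 1 = 0 := congrArg Prod.fst hq
        have := DFunLike.congr_fun this i₀
        simp [Finsupp.add_apply] at this
      have h2 : R'.mapDomain g₂ (0, m) = R' (0, m') := by
        rw [show ((0, m) : (Fin n →₀ ℕ) × (Fin n →₀ ℕ)) = g₂ (0, m') by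
          rw [hg₂]; exact Prod.ext rfl hsplit]
        exact Finsupp.mapDomain_apply hg₂inj R' (0, m')
      rw [h1, h2, IH'.2.1, zero_add]
    refine ⟨parta, partb, ?_⟩
    intro i hi
    have hi₀supp : i₀ ∈ m.support := Finsupp.mem_support_iff.mpr (by omega)
    by_cases hmi0 : m i = 0
    · rw [hmi0, Nat.cast_zero]
      by_contra hne
      have hmem := Finsupp.mem_support_iff.mpr hne
      have := parta _ hmem
      have h2 := DFunLike.congr_fun this i
      simp only [Finsupp.add_apply, Finsupp.tsub_apply, Finsupp.single_eq_same] at h2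
      omega
    · have hii : i = i₀ := le_antisymm (hi i₀ hi₀supp) (not_lt.mp (fun h => hmi0 (hmz i h)))
      subst hii
      rw [hsub, hkey, Finsupp.add_apply]
      have h1 : R'.mapDomain g₁ (Finsupp.single i 1, m') = R' (0, m') := by
        rw [show ((Finsupp.single i 1, m') : (Fin n →₀ ℕ) × (Fin n →₀ ℕ)) = g₁ (0, m') by
          rw [hg₁]; exact Prod.ext (zero_add _).symm rfl]
        exact Finsupp.mapDomain_apply hg₁inj R' (0, m')
      rw [h1, IH'.2.1]
      by_cases hm'i : m' i = 0
      · have h2 : R'.mapDomain g₂ (Finsupp.single i 1, m') = 0 := by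
          apply Finsupp.mapDomain_notin_range
          rintro ⟨q, hq⟩
          have : q.2 + Finsupp.single i 1 = m' := congrArg Prod.snd hq
          have := DFunLike.congr_fun this i
          simp only [Finsupp.add_apply, Finsupp.single_eq_same] at this
          omega
        rw [h2]
        have : m i = 1 := by omega
        rw [this]
        norm_num
      · have hsub2 : (m' - Finsupp.single i 1) + Finsupp.single i 1 = m' := by
          ext k
          by_cases hk : k = i
          · subst hk
            simp only [Finsupp.add_apply, Finsupp.tsub_apply, Finsupp.single_eq_same]
            omega
          · simp [Finsupp.add_apply, Finsupp.tsub_apply,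
              Finsupp.single_eq_of_ne' (Ne.symm hk)]
        have h2 : R'.mapDomain g₂ (Finsupp.single i 1, m') = R' (Finsupp.single i 1, m' - Finsupp.single i 1) := by
          rw [show ((Finsupp.single i 1, m') : (Fin n →₀ ℕ) × (Fin n →₀ ℕ))
              = g₂ (Finsupp.single i 1, m' - Finsupp.single i 1) by
            rw [hg₂]; exact Prod.ext rfl hsub2.symm]
          exact Finsupp.mapDomain_apply hg₂inj R' _
        have hcondm' : ∀ j ∈ m'.support, i ≤ j := by
          intro j hj
          by_contra h
          exact absurd (hm'z j (not_le.mp h)) (Finsupp.mem_support_iff.mp hj)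
        rw [h2, IH'.2.2 i hcondm']
        rw [show m i = m' i + 1 by omega]
        push_cast
        ring

include hB in
theorem iota_deg_le_one (z : L) : ∀ m ∈ (B.repr (ι ℂ z)).support, dg m ≤ 1 := by
  intro m₀ hm₀
  by_contra hdg2
  set c := B.repr (ι ℂ z) with hc
  have hm₀ne : m₀ ≠ 0 := by
    intro h
    rw [h] at hdg2
    exact hdg2 (by simp [dg])
  obtain ⟨i, l, hsplit, hmz, hlz, hmi, hdgm, hsubm⟩ := exists_peel m₀ hm₀ne
  have hlne : l ≠ 0 := by
    intro h
    apply hdg2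
    rw [hdgm, h]
    simp [dg]
  set q : (Fin n →₀ ℕ) × (Fin n →₀ ℕ) := (Finsupp.single i 1, l) with hq
  have hx : (ι ℂ z : U) = c.sum fun m a => a • B m := by
    conv_lhs => rw [← B.linearCombination_repr (ι ℂ z)]
    rw [Finsupp.linearCombination_apply]
  -- first computation : T q = 0
  have hT0 : (BB B).repr (Delta (ι ℂ z)) q = 0 := by
    rw [Delta_ι, map_add, Finsupp.add_apply]
    have h1 : (BB B).repr ((ι ℂ z : U) ⊗ₜ[ℂ] (1:U)) q = 0 := by
      have : (ι ℂ z : U) ⊗ₜ[ℂ] (1:U) = c.sum fun m a => a • (BB B) (m, 0) := by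
        conv_lhs => rw [hx]
        rw [Finsupp.sum, TensorProduct.sum_tmul]
        apply Finset.sum_congr rfl
        intro m _
        rw [← TensorProduct.smul_tmul']
        congr 1
        rw [BB, Basis.tensorProduct_apply, mono_zero X B hB]
      rw [this, map_finsuppSum, Finsupp.sum_apply]
      apply Finset.sum_eq_zero
      intro m _
      have hne : (m, (0 : Fin n →₀ ℕ)) ≠ q := by
        intro h
        exact hlne ((congrArg Prod.snd h)).symm
      dsimp only
      rw [map_smul, Basis.repr_self, Finsupp.smul_apply, Finsupp.single_eq_of_ne' hne,
        smul_zero]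
    have h2 : (BB B).repr ((1:U) ⊗ₜ[ℂ] (ι ℂ z : U)) q = 0 := by
      have : (1:U) ⊗ₜ[ℂ] (ι ℂ z : U) = c.sum fun m a => a • (BB B) (0, m) := by
        conv_lhs => rw [hx]
        rw [Finsupp.sum, TensorProduct.tmul_sum]
        apply Finset.sum_congr rfl
        intro m _
        rw [TensorProduct.tmul_smul]
        congr 1
        rw [BB, Basis.tensorProduct_apply, mono_zero X B hB]
      rw [this, map_finsuppSum, Finsupp.sum_apply]
      apply Finset.sum_eq_zero
      intro m _
      have hne : ((0 : Fin n →₀ ℕ), m) ≠ q := by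
        intro h
        have h1 := congrArg Prod.fst h
        have := DFunLike.congr_fun h1.symm i
        simp [hq] at this
      dsimp only
      rw [map_smul, Basis.repr_self, Finsupp.smul_apply, Finsupp.single_eq_of_ne' hne,
        smul_zero]
    rw [h1, h2, add_zero]
  -- second computation : T q = c m₀ * m₀ i
  have hT1 : (BB B).repr (Delta (ι ℂ z)) q = c m₀ * (m₀ i : ℂ) := by
    have hDx : (BB B).repr (Delta (ι ℂ z)) = c.sum fun m a => a • (BB B).repr (Delta (B m)) := by
      conv_lhs => rw [hx]
      rw [map_finsuppSum, map_finsuppSum]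
      apply Finsupp.sum_congr
      intro m _
      rw [map_smul, map_smul]
    rw [hDx, Finsupp.sum_apply]
    rw [Finsupp.sum, Finset.sum_eq_single m₀]
    · rw [Finsupp.smul_apply]
      have hmin : ∀ j ∈ m₀.support, i ≤ j := by
        intro j hj
        by_contra h
        exact absurd (hmz j (not_le.mp h)) (Finsupp.mem_support_iff.mp hj)
      have := (delta_struct X B hB (dg m₀) m₀ le_rfl).2.2 i hmin
      rw [hq, ← hsubm, this]
      simp [smul_eq_mul]
    · intro m hm hne
      rw [Finsupp.smul_apply]
      have : (BB B).repr (Delta (B m)) q = 0 := by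
        by_contra hnz
        have hmem := Finsupp.mem_support_iff.mpr hnz
        have := (delta_struct X B hB (dg m) m le_rfl).1 q hmem
        apply hne
        rw [← this, hq, hsplit, add_comm]
      rw [this, smul_zero]
    · intro h
      exact absurd hm₀ h
  rw [hT0] at hT1
  have hm₀i : m₀ i ≠ 0 := by omega
  have hc0 : c m₀ = 0 := by
    rcases mul_eq_zero.mp hT1.symm with h | h
    · exact h
    · exact absurd (Nat.cast_injective (h.trans Nat.cast_zero.symm) : m₀ i = 0) hm₀i
  exact absurd hc0 (Finsupp.mem_support_iff.mp hm₀)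

/-- filtration -/
def Flt (B : Basis (Fin n →₀ ℕ) ℂ (UniversalEnvelopingAlgebra ℂ L)) (d : ℕ) :
    Submodule ℂ (UniversalEnvelopingAlgebra ℂ L) :=
  Submodule.span ℂ (⇑B '' {m | dg m ≤ d})

theorem mem_Flt_iff {d : ℕ} {x : U} : x ∈ Flt B d ↔ ∀ m ∈ (B.repr x).support, dg m ≤ d := by
  rw [Flt, Basis.mem_span_image]
  exact ⟨fun h m hm => h hm, fun h m hm => h m hm⟩

theorem mono_mem_Flt {m : Fin n →₀ ℕ} {d : ℕ} (hdm : dg m ≤ d) : B m ∈ Flt B d :=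
  Submodule.subset_span ⟨m, hdm, rfl⟩

theorem Flt_mono {d e : ℕ} (hde : d ≤ e) : Flt B d ≤ Flt B e :=
  Submodule.span_mono (Set.image_mono fun _ hm => le_trans hm hde)

include hB in
theorem L2_of_L1 (e : ℕ)
    (h1 : ∀ m : Fin n →₀ ℕ, dg m ≤ e → ∀ j : Fin n,
      ι ℂ (X j) * B m - B (m + Finsupp.single j 1) ∈ Flt B (dg m)) :
    ∀ x ∈ Flt B e, ∀ z : L, ι ℂ z * x ∈ Flt B (e+1) := by
  intro x hx z
  induction hx using Submodule.span_induction with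
  | mem x hxm =>
    obtain ⟨m, hm, rfl⟩ := hxm
    have hm : dg m ≤ e := hm
    have hz : (ι ℂ z : U) = (B.repr (ι ℂ z)).sum fun k a => a • B k := by
      conv_lhs => rw [← B.linearCombination_repr (ι ℂ z)]
      rw [Finsupp.linearCombination_apply]
    rw [hz, Finsupp.sum, Finset.sum_mul]
    apply Submodule.sum_mem
    intro k hk
    rw [smul_mul_assoc]
    apply Submodule.smul_mem
    have hdk : dg k ≤ 1 := iota_deg_le_one X B hB z k hk
    by_cases hk0 : k = 0
    · subst hk0
      rw [mono_zero X B hB, one_mul]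
      exact mono_mem_Flt B (le_trans hm (Nat.le_succ e))
    · obtain ⟨j, k', hksplit, _, _, _, hkdg, _⟩ := exists_peel k hk0
      have hk'0 : k' = 0 := by
        have : dg k' = 0 := by omega
        rwa [show dg k' = Finsupp.degree k' from rfl, Finsupp.degree_eq_zero_iff] at this
      subst hk'0
      rw [zero_add] at hksplit
      subst hksplit
      have hBk : B (Finsupp.single j 1) = ι ℂ (X j) := by
        rw [show Finsupp.single j 1 = 0 + Finsupp.single j 1 by rw [zero_add],
          mono_mul X B hB 0 j (fun _ _ => rfl), mono_zero X B hB, mul_one]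
      rw [hBk, show ι ℂ (X j) * B m
          = (ι ℂ (X j) * B m - B (m + Finsupp.single j 1)) + B (m + Finsupp.single j 1) by rw [sub_add_cancel]]
      apply Submodule.add_mem
      · exact Flt_mono B (le_trans hm (Nat.le_succ e)) (h1 m hm j)
      · apply mono_mem_Flt
        rw [dg_add]
        simpa [dg] using Nat.add_le_add hm (le_refl 1)
  | zero => rw [mul_zero]; exact Submodule.zero_mem _
  | add x y _ _ hx hy => rw [mul_add]; exact Submodule.add_mem _ hx hy
  | smul a x _ hx => rw [mul_smul_comm]; exact Submodule.smul_mem _ a hx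

include hB in
theorem L1 : ∀ (d : ℕ) (m : Fin n →₀ ℕ), dg m = d → ∀ j : Fin n,
    ι ℂ (X j) * B m - B (m + Finsupp.single j 1) ∈ Flt B d := by
  intro d
  induction d using Nat.strong_induction_on with
  | _ d IH =>
  have L2e : ∀ e, e < d → ∀ x ∈ Flt B e, ∀ z : L, ι ℂ z * x ∈ Flt B (e+1) := by
    intro e he
    apply L2_of_L1 X B hB e
    intro m hm j
    exact IH (dg m) (lt_of_le_of_lt hm he) m rfl j
  intro m hdm j
  by_cases hm0 : m = 0
  · subst hm0
    rw [mono_zero X B hB, mul_one, zero_add,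
      show B (Finsupp.single j 1) = ι ℂ (X j) by
        rw [show Finsupp.single j 1 = 0 + Finsupp.single j 1 by rw [zero_add],
          mono_mul X B hB 0 j (fun _ _ => rfl), mono_zero X B hB, mul_one],
      sub_self]
    exact Submodule.zero_mem _
  obtain ⟨i, m', hsplit, hmz, hm'z, hmi, hdg, hsub⟩ := exists_peel m hm0
  by_cases hji : j ≤ i
  · rw [← mono_mul X B hB m j (fun k hk => hmz k (lt_of_lt_of_le hk hji)), sub_self]
    exact Submodule.zero_mem _
  push_neg at hji
  have hBm : B m = ι ℂ (X i) * B m' := by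
    rw [hsplit]; exact mono_mul X B hB m' i hm'z
  have hd' : dg m' < d := by omega
  set r := ι ℂ (X j) * B m' - B (m' + Finsupp.single j 1) with hr
  have hrF : r ∈ Flt B (dg m') := IH (dg m') hd' m' rfl j
  have hxx : ι ℂ (X j) * ι ℂ (X i)
      = ι ℂ (X i) * ι ℂ (X j) + ι ℂ ⁅X j, X i⁆ := by
    rw [LieHom.map_lie, Ring.lie_def]
    noncomm_ring
  have e1 : B (m + Finsupp.single j 1) = ι ℂ (X i) * B (m' + Finsupp.single j 1) := by
    rw [show m + Finsupp.single j 1 = (m' + Finsupp.single j 1) + Finsupp.single i 1 by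
      rw [hsplit, add_right_comm]]
    apply mono_mul X B hB
    intro k hk
    rw [Finsupp.add_apply, hm'z k hk,
      Finsupp.single_eq_of_ne' (by exact fun h => absurd h (ne_of_gt (lt_trans hk hji))), add_zero]
  have e2 : ι ℂ (X j) * B m
      = ι ℂ (X i) * (ι ℂ (X j) * B m') + ι ℂ ⁅X j, X i⁆ * B m' := by
    rw [hBm, ← mul_assoc, hxx, add_mul, mul_assoc]
  have e3 : ι ℂ (X j) * B m - B (m + Finsupp.single j 1)
      = ι ℂ (X i) * r + ι ℂ ⁅X j, X i⁆ * B m' := by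
    rw [e2, e1, hr, mul_sub]
    abel
  rw [e3]
  have hfd : dg m' + 1 = d := by omega
  apply Submodule.add_mem
  · rw [← hfd]
    exact L2e (dg m') hd' r hrF (X i)
  · rw [← hfd]
    exact L2e (dg m') hd' (B m') (mono_mem_Flt B le_rfl) ⁅X j, X i⁆

include hB in
theorem L2 (e : ℕ) : ∀ x ∈ Flt B e, ∀ z : L, ι ℂ z * x ∈ Flt B (e+1) :=
  L2_of_L1 X B hB e (fun m _ j => L1 X B hB (dg m) m rfl j)

include hB in
theorem L3 : ∀ (d : ℕ) (a : Fin n →₀ ℕ), dg a = d → ∀ b : Fin n →₀ ℕ,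
    B a * B b - B (a + b) ∈ Flt B (dg a + dg b - 1) := by
  intro d
  induction d using Nat.strong_induction_on with
  | _ d IH =>
  intro a hda b
  by_cases ha0 : a = 0
  · subst ha0
    rw [mono_zero X B hB, one_mul, zero_add, sub_self]
    exact Submodule.zero_mem _
  obtain ⟨i, a', hsplit, haz, ha'z, hai, hdga, hsuba⟩ := exists_peel a ha0
  have hBa : B a = ι ℂ (X i) * B a' := by
    rw [hsplit]; exact mono_mul X B hB a' i ha'z
  set s := B a' * B b - B (a' + b) with hs
  have hsF : s ∈ Flt B (dg a' + dg b - 1) := IH (dg a') (by omega) a' rfl b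
  set t := ι ℂ (X i) * B (a' + b) - B (a' + b + Finsupp.single i 1) with ht
  have htF : t ∈ Flt B (dg a' + dg b) := by
    have := L1 X B hB (dg (a' + b)) (a' + b) rfl i
    rwa [dg_add] at this
  have habe : a' + b + Finsupp.single i 1 = a + b := by
    rw [hsplit, add_right_comm]
  have e4 : B a * B b - B (a + b) = t + ι ℂ (X i) * s := by
    rw [ht, hs, hBa, habe, mul_assoc, mul_sub]
    abel
  rw [e4, show dg a + dg b - 1 = dg a' + dg b by omega]
  apply Submodule.add_mem
  · exact htF
  · by_cases h00 : dg a' + dg b = 0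
    · have ha'0 : a' = 0 := by
        have : dg a' = 0 := by omega
        rwa [show dg a' = Finsupp.degree a' from rfl, Finsupp.degree_eq_zero_iff] at this
      have hb0 : b = 0 := by
        have : dg b = 0 := by omega
        rwa [show dg b = Finsupp.degree b from rfl, Finsupp.degree_eq_zero_iff] at this
      have hs0 : s = 0 := by
        rw [hs, ha'0, hb0, zero_add, mono_zero X B hB, one_mul, sub_self]
      rw [hs0, mul_zero]
      exact Submodule.zero_mem _
    · have := L2 X B hB (dg a' + dg b - 1) s hsF (X i)
      exact Flt_mono B (by omega) this

end

/-- For a two-sided ideal `I` of `U(g)` with PBW monomial basis `B`, the set `T(I)`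
of leading monomials of nonzero elements of `I` (leading with respect to the total
degree order refined lexicographically) is an upper set for the componentwise partial
order on multi-indices. -/
theorem leading_monomials_upper_set {L : Type*} [LieRing L] [LieAlgebra ℂ L]
    (n : ℕ) (X : Fin n → L)
    (B : Module.Basis (Fin n →₀ ℕ) ℂ (UniversalEnvelopingAlgebra ℂ L))
    (hB : ∀ m : Fin n →₀ ℕ, B m =
      ((List.finRange n).map fun i => (UniversalEnvelopingAlgebra.ι ℂ (X i)) ^ (m i)).prod)
    (dlex : (Fin n →₀ ℕ) → (Fin n →₀ ℕ) → Prop)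
    (hdlex : ∀ a b : Fin n →₀ ℕ, dlex a b ↔
      ((a.sum fun _ k => k) < (b.sum fun _ k => k) ∨
        ((a.sum fun _ k => k) = (b.sum fun _ k => k) ∧
          Finsupp.Lex (· < ·) (· < ·) a b)))
    (lead : UniversalEnvelopingAlgebra ℂ L → (Fin n →₀ ℕ) → Prop)
    (hlead : ∀ u m, lead u m ↔
      (u ≠ 0 ∧ m ∈ (B.repr u).support ∧
        ∀ m' ∈ (B.repr u).support, m' = m ∨ dlex m' m))
    (I : Submodule ℂ (UniversalEnvelopingAlgebra ℂ L))
    (hIl : ∀ a : UniversalEnvelopingAlgebra ℂ L, ∀ x ∈ I, a * x ∈ I)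
    (hIr : ∀ a : UniversalEnvelopingAlgebra ℂ L, ∀ x ∈ I, x * a ∈ I)
    (TI : Set (Fin n →₀ ℕ)) (hTI : TI = {m | ∃ u ∈ I, lead u m}) :
    ∀ v ∈ TI, ∀ w : Fin n →₀ ℕ, v ≤ w → w ∈ TI := by
  intro v hv w hvw
  rw [hTI] at hv ⊢
  obtain ⟨u, huI, hlu⟩ := hv
  rw [hlead] at hlu
  obtain ⟨hu0, hvs, hmax⟩ := hlu
  by_cases hvw0 : v = w
  · exact ⟨u, huI, (hlead u w).mpr ⟨hu0, hvw0 ▸ hvs, hvw0 ▸ hmax⟩⟩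
  set d := w - v with hd
  have hvd : v + d = w := add_tsub_cancel_of_le hvw
  have hdne : d ≠ 0 := fun h => hvw0 (by rw [← hvd, h, add_zero])
  have hdg1 : 1 ≤ dg d := by
    rcases Nat.eq_zero_or_pos (dg d) with h | h
    · exact absurd (by
        rwa [show dg d = Finsupp.degree d from rfl, Finsupp.degree_eq_zero_iff] at h) hdne
    · exact h
  refine ⟨B d * u, hIl _ u huI, (hlead _ w).mpr ?_⟩
  set c := B.repr u with hc
  set D := dg d + dg v with hD
  have hdgw : dg w = D := by rw [← hvd, dg_add]; omega
  have hsupdeg : ∀ m ∈ c.support, dg m ≤ dg v := by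
    intro m hm
    rcases hmax m hm with h | h
    · rw [h]
    · rw [hdlex] at h
      rcases h with h | h
      · exact le_of_lt h
      · exact le_of_eq h.1
  have hu : u = c.sum fun m a => a • B m := by
    conv_lhs => rw [← B.linearCombination_repr u]
    rw [Finsupp.linearCombination_apply]
  set r := c.sum (fun m a => a • (B d * B m - B (d + m))) with hrdef
  have hrF : r ∈ Flt B (D - 1) := by
    rw [hrdef, Finsupp.sum]
    apply Submodule.sum_mem
    intro m hm
    apply Submodule.smul_mem
    have h3 := L3 X B hB (dg d) d rfl m
    refine Flt_mono B ?_ h3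
    have := hsupdeg m hm
    omega
  have hsplit : B d * u = (c.sum fun m a => a • B (d + m)) + r := by
    conv_lhs => rw [hu, Finsupp.mul_sum]
    rw [hrdef, ← Finsupp.sum_add]
    apply Finsupp.sum_congr
    intro m _
    rw [mul_smul_comm, ← smul_add, add_sub_cancel]
  have hrepr : B.repr (B d * u) = c.mapDomain (fun m => d + m) + B.repr r := by
    rw [hsplit, map_add]
    congr 1
    rw [map_finsuppSum, Finsupp.mapDomain]
    apply Finsupp.sum_congr
    intro m _
    rw [map_smul, Basis.repr_self, Finsupp.smul_single', mul_one]
  have hinj : Function.Injective fun m : Fin n →₀ ℕ => d + m := fun p q h => by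
    exact add_left_cancel h
  have hρ : ∀ p ∈ (B.repr r).support, dg p ≤ D - 1 := (mem_Flt_iff B).mp hrF
  have hcoefw : B.repr (B d * u) w = c v := by
    rw [hrepr, Finsupp.add_apply, show w = d + v by rw [← hvd, add_comm],
      Finsupp.mapDomain_apply hinj]
    have h0 : B.repr r (d + v) = 0 := by
      by_contra h
      have h4 := hρ _ (Finsupp.mem_support_iff.mpr h)
      rw [show dg (d + v) = D from by rw [dg_add]] at h4
      omega
    rw [h0, add_zero]
  have hcv : c v ≠ 0 := Finsupp.mem_support_iff.mp hvs
  refine ⟨?_, ?_, ?_⟩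
  · intro h
    exact hcv (by rw [← hcoefw, h, map_zero, Finsupp.zero_apply])
  · exact Finsupp.mem_support_iff.mpr (hcoefw ▸ hcv)
  · intro m'' hm''
    rw [hrepr] at hm''
    have hsub := Finsupp.support_add hm''
    rw [Finset.mem_union] at hsub
    rcases hsub with h | h
    · classical
      have h5 := Finsupp.mapDomain_support h
      rw [Finset.mem_image] at h5
      obtain ⟨m, hm, rfl⟩ := h5
      rcases hmax m hm with rfl | hlt
      · left
        rw [← hvd]
        exact add_comm d m
      · right
        rw [hdlex]
        rcases (hdlex m v).mp hlt with hlt2 | ⟨heq, hlex⟩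
        · left
          rw [show ((d + m).sum fun _ k => k) = dg d + dg m from dg_add d m,
            show (w.sum fun _ k => k) = dg w from rfl, hdgw]
          have : dg m < dg v := hlt2
          omega
        · right
          constructor
          · rw [show ((d + m).sum fun _ k => k) = dg d + dg m from dg_add d m,
              show (w.sum fun _ k => k) = dg w from rfl, hdgw]
            have : dg m = dg v := heq
            omega
          · rw [show w = d + v by rw [← hvd, add_comm]]
            obtain ⟨iw, h1, h2⟩ := Finsupp.lex_def.mp hlex
            refine Finsupp.lex_def.mpr ⟨iw, fun j hj => ?_, ?_⟩
            · rw [Finsupp.add_apply, Finsupp.add_apply, h1 j hj]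
            · rw [Finsupp.add_apply, Finsupp.add_apply]
              exact Nat.add_lt_add_left h2 _
    · right
      rw [hdlex]
      left
      have hd1 := hρ _ h
      rw [show (m''.sum fun _ k => k) = dg m'' from rfl,
        show (w.sum fun _ k => k) = dg w from rfl, hdgw]
      omega
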